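/- Let n ≥ 1 and J > 0, h > 0. On the complete graph K_n, every monotone path from ⊟ to ⊞ (i.e., every path that flips exactly one spin from −1 to +1 at each step) is an optimal path: its maximal energy equals the communication height, and moreover Φ(⊟,⊞) − H(⊟) = max_{0 ≤ m ≤ n} ( J·m·(n−m) − h·m ). -/

import Mathlib

/-- Spin value of a Boolean: `+1` for `true`, `−1` for `false`. -/
def spin (b : Bool) : ℝ := if b then 1 else -1

/-- The product of the spins at the two endpoints of an unoriented edge. -/
noncomputable def edgeEnergy {V : Type*} (σ : V → Bool) : Sym2 V → ℝ :=
  Sym2.lift ⟨fun v w => spin (σ v) * spin (σ w), fun v w => by ring⟩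

/-- The Hamiltonian `H(σ) = −(J/2)·Σ_{(v,w)∈E} σ(v)σ(w) − (h/2)·Σ_v σ(v)` of a
multigraph with edge multiset `E` (edges counted with multiplicity). -/
noncomputable def hamiltonian {V : Type*} [Fintype V] (J h : ℝ)
    (E : Multiset (Sym2 V)) (σ : V → Bool) : ℝ :=
  -(J/2) * (E.map (edgeEnergy σ)).sum - (h/2) * ∑ v, spin (σ v)

/-- Two spin configurations differ at exactly one vertex. -/
def IsFlipStep {V : Type*} [DecidableEq V] (σ τ : V → Bool) : Prop :=
  ∃ v, τ = Function.update σ v (! σ v)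

/-- The communication height `Φ(ξ,ζ)`: the minimum over paths `γ : ξ → ζ` of
single spin-flips of the maximal energy along the path. -/
noncomputable def commHeight {V : Type*} [Fintype V] [DecidableEq V]
    (H : (V → Bool) → ℝ) (ξ ζ : V → Bool) : ℝ :=
  sInf { M : ℝ | ∃ (k : ℕ) (γ : Fin (k+1) → (V → Bool)),
    γ 0 = ξ ∧ γ (Fin.last k) = ζ ∧
    (∀ i : Fin k, IsFlipStep (γ i.castSucc) (γ i.succ)) ∧
    M = Finset.univ.sup' ⟨0, Finset.mem_univ 0⟩ (fun i => H (γ i)) }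

/-- The energy barrier `Γ* = Φ(⊟,⊞) − H(⊟)` of an energy landscape `H` on spin
configurations. -/
noncomputable def gammaStar {V : Type*} [Fintype V] [DecidableEq V]
    (H : (V → Bool) → ℝ) : ℝ :=
  commHeight H (fun _ => false) (fun _ => true) - H (fun _ => false)


/-- The edge multiset of the complete graph `K_n` on `Fin n`: all non-diagonal
unordered pairs, each once. -/
def completeEdges (n : ℕ) : Multiset (Sym2 (Fin n)) :=
  (Finset.univ.filter (fun e : Sym2 (Fin n) => ¬ e.IsDiag)).val

/-! ### Auxiliary lemmas -/

def cnt {n : ℕ} (σ : Fin n → Bool) : ℕ := (Finset.univ.filter (fun x => σ x = true)).card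

lemma sum_spin {n : ℕ} (σ : Fin n → Bool) :
    ∑ v, spin (σ v) = 2 * (cnt σ : ℝ) - n := by
  have hcard : cnt σ + (Finset.univ.filter (fun x => ¬ σ x = true)).card = n := by
    rw [cnt, Finset.card_filter_add_card_filter_not]
    simp
  have h1 : ∑ v, spin (σ v)
      = (∑ _v ∈ Finset.univ.filter (fun x => σ x = true), (1:ℝ))
        + ∑ _v ∈ Finset.univ.filter (fun x => ¬ σ x = true), (-1:ℝ) := by
    simp only [spin]
    rw [← Finset.sum_ite]
  rw [h1]
  simp only [Finset.sum_const, nsmul_eq_mul]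
  have := congrArg (Nat.cast : ℕ → ℝ) hcard
  push_cast at this ⊢
  rw [← this, cnt]
  ring

lemma image_offDiag (n : ℕ) :
    (Finset.univ.offDiag.image (Sym2.mk.uncurry : Fin n × Fin n → Sym2 (Fin n)))
      = Finset.univ.filter (fun e : Sym2 (Fin n) => ¬ e.IsDiag) := by
  ext e
  induction e using Sym2.ind with
  | _ a b =>
    simp only [Finset.mem_image, Finset.mem_offDiag, Finset.mem_filter, Finset.mem_univ,
      true_and, Sym2.mk_isDiag_iff]
    constructor
    · rintro ⟨⟨x, y⟩, hxy, hmk⟩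
      simp only [ne_eq] at hxy
      simp only [Function.uncurry_apply_pair] at hmk
      rw [Sym2.eq_iff] at hmk
      rintro rfl
      rcases hmk with ⟨rfl, rfl⟩ | ⟨rfl, rfl⟩ <;> exact hxy rfl
    · intro hab
      exact ⟨(a, b), by simpa using hab, rfl⟩

lemma fiber_card (n : ℕ) (a b : Fin n) (hab : a ≠ b) :
    (Finset.univ.offDiag.filter (fun p : Fin n × Fin n => Sym2.mk.uncurry p = s(a, b))).card = 2 := by
  have : Finset.univ.offDiag.filter (fun p : Fin n × Fin n => Sym2.mk.uncurry p = s(a, b))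
      = {(a, b), (b, a)} := by
    ext ⟨x, y⟩
    simp only [Finset.mem_filter, Finset.mem_offDiag, Finset.mem_univ, true_and,
      Finset.mem_insert, Finset.mem_singleton, Prod.mk.injEq, Function.uncurry_apply_pair, Sym2.eq_iff]
    constructor
    · rintro ⟨-, (⟨rfl, rfl⟩ | ⟨rfl, rfl⟩)⟩
      · left; exact ⟨rfl, rfl⟩
      · right; exact ⟨rfl, rfl⟩
    · rintro (⟨rfl, rfl⟩ | ⟨rfl, rfl⟩)
      · exact ⟨hab, Or.inl ⟨rfl, rfl⟩⟩
      · exact ⟨fun hh => hab hh.symm, Or.inr ⟨rfl, rfl⟩⟩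
  rw [this]
  rw [Finset.card_insert_of_notMem
    (by intro hmem; simp only [Finset.mem_singleton, Prod.ext_iff] at hmem; exact hab hmem.1)]
  simp

lemma edge_sum {n : ℕ} (σ : Fin n → Bool) :
    ((completeEdges n).map (edgeEnergy σ)).sum = ((∑ v, spin (σ v))^2 - n) / 2 := by
  have hmul : (∑ v, spin (σ v))^2 = ∑ p ∈ Finset.univ ×ˢ Finset.univ,
      spin (σ p.1) * spin (σ p.2) := by
    rw [sq, Finset.sum_mul_sum, Finset.sum_product]
  have hsplit : ∑ p ∈ Finset.univ ×ˢ Finset.univ, spin (σ p.1) * spin (σ p.2)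
      = (∑ p ∈ (Finset.univ : Finset (Fin n)).diag, spin (σ p.1) * spin (σ p.2))
        + ∑ p ∈ (Finset.univ : Finset (Fin n)).offDiag, spin (σ p.1) * spin (σ p.2) := by
    rw [← Finset.diag_union_offDiag, Finset.sum_union (Finset.disjoint_diag_offDiag _)]
  have hdiag : ∑ p ∈ (Finset.univ : Finset (Fin n)).diag, spin (σ p.1) * spin (σ p.2)
      = n := by
    rw [Finset.sum_diag]
    have : ∀ v : Fin n, spin (σ v) * spin (σ v) = 1 := by
      intro v; by_cases hv : σ v <;> simp [spin, hv]
    simp [this]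
  have hoff : ∑ p ∈ (Finset.univ : Finset (Fin n)).offDiag, spin (σ p.1) * spin (σ p.2)
      = 2 * ((completeEdges n).map (edgeEnergy σ)).sum := by
    have h1 : ∀ p : Fin n × Fin n, spin (σ p.1) * spin (σ p.2) = edgeEnergy σ (Sym2.mk.uncurry p) := by
      rintro ⟨x, y⟩; rfl
    rw [Finset.sum_congr rfl (fun p _ => h1 p), Finset.sum_comp, image_offDiag]
    have hE : ((completeEdges n).map (edgeEnergy σ)).sum
        = ∑ e ∈ Finset.univ.filter (fun e : Sym2 (Fin n) => ¬ e.IsDiag), edgeEnergy σ e := rfl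
    rw [hE, Finset.mul_sum]
    apply Finset.sum_congr rfl
    intro e he
    induction e using Sym2.ind with
    | _ a b =>
      simp only [Finset.mem_filter, Sym2.mk_isDiag_iff] at he
      rw [fiber_card n a b he.2]
      simp [mul_comm]
  rw [hoff] at hsplit
  rw [hdiag] at hsplit
  rw [hmul.trans hsplit]
  ring

lemma cnt_update_true {n : ℕ} (σ : Fin n → Bool) (v : Fin n) (hv : σ v = false) :
    cnt (Function.update σ v true) = cnt σ + 1 := by
  have hfilter : Finset.univ.filter (fun x => Function.update σ v true x = true)
      = insert v (Finset.univ.filter (fun x => σ x = true)) := by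
    ext x
    by_cases hx : x = v
    · subst hx; simp [Function.update_self]
    · simp [Function.update_of_ne hx, hx]
  rw [cnt, hfilter, Finset.card_insert_of_notMem (by simp [hv]), cnt]

lemma cnt_update_false {n : ℕ} (σ : Fin n → Bool) (v : Fin n) (hv : σ v = true) :
    cnt σ = cnt (Function.update σ v false) + 1 := by
  have hfilter : Finset.univ.filter (fun x => Function.update σ v false x = true)
      = (Finset.univ.filter (fun x => σ x = true)).erase v := by
    ext x
    by_cases hx : x = v
    · subst hx; simp [Function.update_self]
    · simp [Function.update_of_ne hx, hx]
  rw [cnt, cnt, hfilter, Finset.card_erase_of_mem (by simp [hv])]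
  have : 0 < (Finset.univ.filter (fun x => σ x = true)).card :=
    Finset.card_pos.mpr ⟨v, by simp [hv]⟩
  omega

lemma cnt_flip {n : ℕ} (σ : Fin n → Bool) (v : Fin n) :
    cnt (Function.update σ v (!σ v)) = cnt σ + 1 ∨
      cnt σ = cnt (Function.update σ v (!σ v)) + 1 := by
  cases hv : σ v
  · left; show cnt (Function.update σ v true) = cnt σ + 1; exact cnt_update_true σ v hv
  · right; show cnt σ = cnt (Function.update σ v false) + 1; exact cnt_update_false σ v hv

lemma cnt_bot {n : ℕ} : cnt (fun _ : Fin n => false) = 0 := by simp [cnt]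

lemma cnt_top {n : ℕ} : cnt (fun _ : Fin n => true) = n := by simp [cnt]

lemma nat_ivt (k : ℕ) (c : ℕ → ℕ)
    (hstep : ∀ j < k, c (j+1) = c j + 1 ∨ c j = c (j+1) + 1)
    (m : ℕ) (h0 : c 0 ≤ m) (hk : m ≤ c k) : ∃ j ≤ k, c j = m := by
  induction k with
  | zero => exact ⟨0, le_refl 0, by omega⟩
  | succ k ih =>
    by_cases hm : m ≤ c k
    · obtain ⟨j, hj, hcj⟩ := ih (fun j hj => hstep j (by omega)) hm
      exact ⟨j, by omega, hcj⟩
    · have := hstep k (by omega)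
      exact ⟨k + 1, le_refl _, by omega⟩

lemma const_add_sup' {α : Type*} (s : Finset α) (hs : s.Nonempty) (c : ℝ) (f : α → ℝ) :
    s.sup' hs (fun x => c + f x) = c + s.sup' hs f := by
  apply le_antisymm
  · exact Finset.sup'_le _ _ fun i hi => add_le_add_right (Finset.le_sup' f hi) c
  · obtain ⟨i, hi, hEq⟩ := Finset.exists_mem_eq_sup' hs f
    rw [hEq]
    exact Finset.le_sup' (fun x => c + f x) hi

lemma fin_sup'_val (k : ℕ) (f : ℕ → ℝ) :
    (Finset.univ.sup' ⟨0, Finset.mem_univ 0⟩ (fun i : Fin (k+1) => f i.val))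
      = (Finset.range (k+1)).sup' (Finset.nonempty_range_iff.mpr (Nat.succ_ne_zero k)) f := by
  apply le_antisymm
  · exact Finset.sup'_le _ _ fun i _ => Finset.le_sup' f (Finset.mem_range.mpr i.isLt)
  · exact Finset.sup'_le _ _ fun m hm =>
      Finset.le_sup' (fun i : Fin (k+1) => f i.val)
        (Finset.mem_univ (⟨m, Finset.mem_range.mp hm⟩ : Fin (k+1)))

lemma ham_formula (n : ℕ) (J h : ℝ) (σ : Fin n → Bool) :
    hamiltonian J h (completeEdges n) σ
      = hamiltonian J h (completeEdges n) (fun _ => false)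
        + (J * (cnt σ) * ((n : ℝ) - cnt σ) - h * cnt σ) := by
  have key : ∀ τ : Fin n → Bool, hamiltonian J h (completeEdges n) τ
      = (-(J/2) * (((n:ℝ)^2 - n)/2) + (h/2)*n)
        + (J * (cnt τ) * ((n : ℝ) - cnt τ) - h * cnt τ) := by
    intro τ
    rw [hamiltonian, edge_sum, sum_spin]
    ring
  rw [key σ, key (fun _ => false), cnt_bot]
  push_cast
  ring

/-- Let `n ≥ 1` and `J > 0`, `h > 0`. On the complete graph `K_n`, every
monotone path from `⊟` to `⊞` (flipping exactly one spin from `−1` to `+1` at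
each step) is optimal: its maximal energy equals the communication height, and
moreover `Φ(⊟,⊞) − H(⊟) = max_{0 ≤ m ≤ n} (J·m·(n−m) − h·m)`. -/
theorem stmt4 (n : ℕ) (hn : 1 ≤ n) (J h : ℝ) (hJ : 0 < J) (hh : 0 < h)
    (k : ℕ) (γ : Fin (k+1) → (Fin n → Bool))
    (h0 : γ 0 = fun _ => false) (hlast : γ (Fin.last k) = fun _ => true)
    (hstep : ∀ i : Fin k, ∃ v, γ i.castSucc v = false ∧
        γ i.succ = Function.update (γ i.castSucc) v true) :
    (Finset.univ.sup' ⟨0, Finset.mem_univ 0⟩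
        fun i => hamiltonian J h (completeEdges n) (γ i))
      = commHeight (hamiltonian J h (completeEdges n)) (fun _ => false) (fun _ => true) ∧
    commHeight (hamiltonian J h (completeEdges n)) (fun _ => false) (fun _ => true)
        - hamiltonian J h (completeEdges n) (fun _ => false)
      = (Finset.range (n+1)).sup' (Finset.nonempty_range_iff.mpr (Nat.succ_ne_zero n))
          (fun m => J * m * ((n : ℝ) - m) - h * m) := by
  classical
  set F : ℕ → ℝ := fun m => J * m * ((n : ℝ) - m) - h * m with hF
  set C0 : ℝ := hamiltonian J h (completeEdges n) (fun _ => false) with hC0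
  have hamF : ∀ σ : Fin n → Bool,
      hamiltonian J h (completeEdges n) σ = C0 + F (cnt σ) := fun σ => ham_formula n J h σ
  -- counts along the given monotone path
  have hcnt : ∀ i : Fin (k+1), cnt (γ i) = i.val := by
    intro i
    induction i using Fin.induction with
    | zero => rw [h0]; exact cnt_bot
    | succ i ih =>
      obtain ⟨v, hv, hup⟩ := hstep i
      rw [hup, cnt_update_true _ _ hv, ih]
      simp
  have hkn : k = n := by
    have h1 := hcnt (Fin.last k)
    rw [hlast, cnt_top] at h1
    simpa using h1.symm
  subst hkn
  set M : ℝ := C0 + (Finset.range (k+1)).sup'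
      (Finset.nonempty_range_iff.mpr (Nat.succ_ne_zero k)) F with hM
  have hsupPath : (Finset.univ.sup' ⟨0, Finset.mem_univ 0⟩
      fun i => hamiltonian J h (completeEdges k) (γ i)) = M := by
    have he : (fun i : Fin (k+1) => hamiltonian J h (completeEdges k) (γ i))
        = fun i : Fin (k+1) => C0 + F i.val := by
      funext i; rw [hamF, hcnt]
    rw [he]
    exact (const_add_sup' _ _ C0 (fun i : Fin (k+1) => F i.val)).trans (congrArg (C0 + ·) (fin_sup'_val k F))
  -- membership of M in the path set
  have hmem : M ∈ { M' : ℝ | ∃ (k' : ℕ) (γ' : Fin (k'+1) → (Fin k → Bool)),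
      γ' 0 = (fun _ => false) ∧ γ' (Fin.last k') = (fun _ => true) ∧
      (∀ i : Fin k', IsFlipStep (γ' i.castSucc) (γ' i.succ)) ∧
      M' = Finset.univ.sup' ⟨0, Finset.mem_univ 0⟩
        (fun i => hamiltonian J h (completeEdges k) (γ' i)) } := by
    refine ⟨k, γ, h0, hlast, ?_, hsupPath.symm⟩
    intro i
    obtain ⟨v, hv, hup⟩ := hstep i
    exact ⟨v, by rw [hup, hv]; rfl⟩
  -- lower bound
  have hlb : ∀ M' ∈ { M' : ℝ | ∃ (k' : ℕ) (γ' : Fin (k'+1) → (Fin k → Bool)),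
      γ' 0 = (fun _ => false) ∧ γ' (Fin.last k') = (fun _ => true) ∧
      (∀ i : Fin k', IsFlipStep (γ' i.castSucc) (γ' i.succ)) ∧
      M' = Finset.univ.sup' ⟨0, Finset.mem_univ 0⟩
        (fun i => hamiltonian J h (completeEdges k) (γ' i)) }, M ≤ M' := by
    rintro M' ⟨k', γ', h0', hlast', hstep', rfl⟩
    obtain ⟨m0, hm0, hm0eq⟩ := Finset.exists_mem_eq_sup'
      (Finset.nonempty_range_iff.mpr (Nat.succ_ne_zero k)) F
    have hk'lt : ∀ j : ℕ, min j k' < k' + 1 := fun j => by omega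
    set c : ℕ → ℕ := fun j => cnt (γ' ⟨min j k', hk'lt j⟩) with hc
    have hcstep : ∀ j < k', c (j+1) = c j + 1 ∨ c j = c (j+1) + 1 := by
      intro j hj
      obtain ⟨v, hup⟩ := hstep' ⟨j, hj⟩
      have e1 : γ' ⟨min j k', hk'lt j⟩ = γ' (Fin.castSucc ⟨j, hj⟩) :=
        congrArg γ' (Fin.ext (by simp [Nat.min_eq_left hj.le]))
      have e2 : γ' ⟨min (j+1) k', hk'lt (j+1)⟩ = γ' (Fin.succ ⟨j, hj⟩) :=
        congrArg γ' (Fin.ext (by simp [Nat.min_eq_left hj]))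
      simp only [hc]
      rw [e1, e2, hup]
      exact cnt_flip _ v
    have hc0 : c 0 = 0 := by
      simp only [hc]
      have e0 : (⟨min 0 k', hk'lt 0⟩ : Fin (k'+1)) = 0 := Fin.ext (by simp)
      rw [e0, h0', cnt_bot]
    have hck : c k' = k := by
      simp only [hc]
      have el : (⟨min k' k', hk'lt k'⟩ : Fin (k'+1)) = Fin.last k' := Fin.ext (by simp)
      rw [el, hlast', cnt_top]
    have hm0k : m0 < k + 1 := Finset.mem_range.mp hm0
    obtain ⟨j, hjk, hcj⟩ := nat_ivt k' c hcstep m0 (by omega) (by omega)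
    have hjval : γ' ⟨min j k', hk'lt j⟩ = γ' ⟨j, by omega⟩ :=
      congrArg γ' (Fin.ext (by simp [Nat.min_eq_left hjk]))
    have hham : hamiltonian J h (completeEdges k) (γ' ⟨j, by omega⟩) = C0 + F m0 := by
      rw [hamF, ← hjval]
      have : cnt (γ' ⟨min j k', hk'lt j⟩) = m0 := hcj
      rw [this]
    calc M = C0 + F m0 := by rw [hM, hm0eq]
      _ = hamiltonian J h (completeEdges k) (γ' ⟨j, by omega⟩) := hham.symm
      _ ≤ _ := Finset.le_sup' (fun i => hamiltonian J h (completeEdges k) (γ' i))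
          (Finset.mem_univ _)
  have hcomm : commHeight (hamiltonian J h (completeEdges k))
      (fun _ => false) (fun _ => true) = M := by
    unfold commHeight
    exact le_antisymm (csInf_le ⟨M, hlb⟩ hmem) (le_csInf ⟨M, hmem⟩ hlb)
  refine ⟨by rw [hsupPath, hcomm], ?_⟩
  rw [hcomm, hM, hC0]
  ring
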